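/- Let X be a Hausdorff space, T, Z ∈ F(X) nonempty closed subsets of X with Z connected, and f a continuous selection for F(X). If q = f(T ∪ D) for some nonempty closed subset D of Z, then f(T ∪ S) belongs to the connected component C[q] of q in X for every nonempty closed subset S of Z. -/

import Mathlib

open Set Filter Topology

/-- The hyperspace of all nonempty closed subsets of `X`. -/
def HypF (X : Type*) [TopologicalSpace X] : Type _ :=
  {S : Set X // S.Nonempty ∧ IsClosed S}

variable {X : Type*} [TopologicalSpace X]

namespace HypF

/-- The Vietoris topology on `HypF X`, generated by the canonical basic sets
`⟨𝒱⟩ = {S | S ⊆ ⋃𝒱 ∧ ∀ V ∈ 𝒱, S ∩ V ≠ ∅}` where `𝒱` runs over the finite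
families of open subsets of `X`. -/
instance : TopologicalSpace (HypF X) :=
  TopologicalSpace.generateFrom
    {B : Set (HypF X) | ∃ 𝒱 : Finset (Set X), (∀ V ∈ 𝒱, IsOpen V) ∧
      B = {S : HypF X | S.1 ⊆ (⋃ V ∈ 𝒱, V) ∧ ∀ V ∈ 𝒱, (S.1 ∩ V).Nonempty}}

/-- The hyperspace is partially ordered by set-theoretic inclusion. -/
instance : PartialOrder (HypF X) :=
  PartialOrder.lift Subtype.val Subtype.coe_injective

/-- The whole space `X` as an element of its hyperspace. -/
def top (X : Type*) [TopologicalSpace X] [Nonempty X] : HypF X :=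
  ⟨univ, univ_nonempty, isClosed_univ⟩

/-- The union of two members of the hyperspace. -/
def union (T S : HypF X) : HypF X :=
  ⟨T.1 ∪ S.1, T.2.1.mono subset_union_left, T.2.2.union S.2.2⟩

end HypF

/-- A continuous selection for the Vietoris hyperspace `HypF X`. -/
def IsContinuousSelection (f : HypF X → X) : Prop :=
  Continuous f ∧ ∀ S : HypF X, f S ∈ S.1

/-- `p` is a cut point of `X`: `X \ {p} = U ∪ V` with `cl U ∩ cl V = {p}`. -/
def IsCutPoint (p : X) : Prop :=
  ∃ U V : Set X, ({p}ᶜ : Set X) = U ∪ V ∧ closure U ∩ closure V = {p}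

/-- `p` is a butterfly point of `X`. -/
def IsButterflyPoint (p : X) : Prop :=
  ∃ F G : Set X, IsClosed F ∧ IsClosed G ∧
    closure (F \ {p}) ∩ closure (G \ {p}) = {p}

/-- `X` is totally disconnected at `p`: `{p}` is an intersection of clopen sets. -/
def TotallyDisconnectedAt (p : X) : Prop :=
  ∃ 𝒞 : Set (Set X), (∀ C ∈ 𝒞, IsClopen C) ∧ ⋂₀ 𝒞 = {p}

/-- `y` has a countable base of clopen neighbourhoods in `Y`. -/
def HasCountableClopenBase {Y : Type*} [TopologicalSpace Y] (y : Y) : Prop :=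
  ∃ ℬ : Set (Set Y), ℬ.Countable ∧ (∀ B ∈ ℬ, IsClopen B ∧ y ∈ B) ∧
    ∀ W : Set Y, IsOpen W → y ∈ W → ∃ B ∈ ℬ, B ⊆ W

/-- `p` is countably-approachable: it is isolated, or it has a countable clopen
base in `cl U` for some open `U ⊆ X \ {p}` with `cl U = U ∪ {p}`. -/
def CountablyApproachable (p : X) : Prop :=
  IsOpen ({p} : Set X) ∨
    ∃ U : Set X, IsOpen U ∧ U ⊆ ({p}ᶜ : Set X) ∧ closure U = U ∪ {p} ∧
      ∀ hp : p ∈ closure U, HasCountableClopenBase (⟨p, hp⟩ : closure U)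

/-- `p` is selection maximal: some continuous selection `f` satisfies `f S = p`
whenever `p ∈ S`. -/
def SelectionMaximal (p : X) : Prop :=
  ∃ f : HypF X → X, IsContinuousSelection f ∧ ∀ S : HypF X, p ∈ S.1 → f S = p

/-- `ℬ` is a local base at `p`. -/
def IsLocalBaseAt (p : X) (ℬ : Set (Set X)) : Prop :=
  (∀ B ∈ ℬ, IsOpen B ∧ p ∈ B) ∧
    ∀ W : Set X, IsOpen W → p ∈ W → ∃ B ∈ ℬ, B ⊆ W

/-- `X_Θ`: the set of values `f(X)` of continuous selections for `HypF X`. -/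
def thetaSet (X : Type*) [TopologicalSpace X] [Nonempty X] : Set X :=
  {p | ∃ f : HypF X → X, IsContinuousSelection f ∧ f (HypF.top X) = p}

/-- `X_Ω`: the set of countably-approachable points of `X`. -/
def omegaSet (X : Type*) [TopologicalSpace X] : Set X :=
  {p | CountablyApproachable p}

/-- `X_Θ*`: the selection maximal points of `X_Θ`. -/
def thetaStarSet (X : Type*) [TopologicalSpace X] [Nonempty X] : Set X :=
  {p ∈ thetaSet X | SelectionMaximal p}

/-- `X_Ω*`: the points of `X_Ω` with a countable clopen base in `X`. -/
def omegaStarSet (X : Type*) [TopologicalSpace X] : Set X :=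
  {p ∈ omegaSet X | HasCountableClopenBase p}

/-- `F₂(X)`: the subsets of `X` with at least one and at most two points. -/
def HypF2 (X : Type*) : Type _ := {S : Set X // ∃ x y : X, S = {x, y}}

/-- The Vietoris topology on `HypF2 X`. -/
instance : TopologicalSpace (HypF2 X) :=
  TopologicalSpace.generateFrom
    {B : Set (HypF2 X) | ∃ 𝒱 : Finset (Set X), (∀ V ∈ 𝒱, IsOpen V) ∧
      B = {S : HypF2 X | S.1 ⊆ (⋃ V ∈ 𝒱, V) ∧ ∀ V ∈ 𝒱, (S.1 ∩ V).Nonempty}}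

/-- The unordered pair `{x, y}` as an element of `HypF2 X`. -/
def pairF {X : Type*} (x y : X) : HypF2 X := ⟨{x, y}, x, y, rfl⟩

/-- A weak selection for `X`. -/
def IsWeakSelection {X : Type*} (σ : HypF2 X → X) : Prop := ∀ S : HypF2 X, σ S ∈ S.1

/-- The strict relation `x <_σ y` generated by a weak selection `σ`. -/
def wsLT {X : Type*} (σ : HypF2 X → X) (x y : X) : Prop := σ (pairF x y) = x ∧ x ≠ y


section Statement12Aux

open TopologicalSpace

variable {Y : Type*} [TopologicalSpace Y]

/-- The generators of the Vietoris topology. -/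
def HypF.gens (Y : Type*) [TopologicalSpace Y] : Set (Set (HypF Y)) :=
  {B : Set (HypF Y) | ∃ 𝒱 : Finset (Set Y), (∀ V ∈ 𝒱, IsOpen V) ∧
      B = {S : HypF Y | S.1 ⊆ (⋃ V ∈ 𝒱, V) ∧ ∀ V ∈ 𝒱, (S.1 ∩ V).Nonempty}}

lemma HypF.topology_eq :
    (inferInstance : TopologicalSpace (HypF Y)) = generateFrom (HypF.gens Y) := rfl

lemma HypF.isOpen_basic (𝒱 : Finset (Set Y)) (h : ∀ V ∈ 𝒱, IsOpen V) :
    IsOpen {S : HypF Y | S.1 ⊆ (⋃ V ∈ 𝒱, V) ∧ ∀ V ∈ 𝒱, (S.1 ∩ V).Nonempty} :=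
  TopologicalSpace.GenerateOpen.basic _ ⟨𝒱, h, rfl⟩

lemma HypF.isOpen_M {W : Set Y} (hW : IsOpen W) (𝒱 : Finset (Set Y))
    (h𝒱 : ∀ V ∈ 𝒱, IsOpen V) :
    IsOpen {S : HypF Y | S.1 ⊆ W ∧ ∀ V ∈ 𝒱, (S.1 ∩ V).Nonempty} := by
  classical
  have key : {S : HypF Y | S.1 ⊆ W ∧ ∀ V ∈ 𝒱, (S.1 ∩ V).Nonempty}
      = {S : HypF Y | S.1 ⊆ (⋃ V ∈ insert W (𝒱.image (· ∩ W)), V) ∧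
          ∀ V ∈ insert W (𝒱.image (· ∩ W)), (S.1 ∩ V).Nonempty} := by
    ext S
    simp only [Set.mem_setOf_eq]
    constructor
    · rintro ⟨hsub, hhit⟩
      constructor
      · intro x hx
        exact Set.mem_biUnion (Finset.mem_insert_self _ _) (hsub hx)
      · intro V hV
        rcases Finset.mem_insert.1 hV with rfl | hV
        · rcases S.2.1 with ⟨x, hx⟩
          exact ⟨x, hx, hsub hx⟩
        · rcases Finset.mem_image.1 hV with ⟨V₀, hV₀, rfl⟩
          rcases hhit V₀ hV₀ with ⟨x, hxS, hxV⟩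
          exact ⟨x, hxS, hxV, hsub hxS⟩
    · rintro ⟨hsub, hhit⟩
      constructor
      · intro x hx
        rcases Set.mem_iUnion₂.1 (hsub hx) with ⟨V, hV, hxV⟩
        rcases Finset.mem_insert.1 hV with rfl | hV
        · exact hxV
        · rcases Finset.mem_image.1 hV with ⟨V₀, _, rfl⟩
          exact hxV.2
      · intro V hV
        rcases hhit (V ∩ W) (Finset.mem_insert_of_mem (Finset.mem_image_of_mem _ hV))
          with ⟨x, hxS, hxV, _⟩
        exact ⟨x, hxS, hxV⟩
  rw [key]
  refine HypF.isOpen_basic _ ?_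
  intro V hV
  rcases Finset.mem_insert.1 hV with rfl | hV
  · exact hW
  · rcases Finset.mem_image.1 hV with ⟨V₀, hV₀, rfl⟩
    exact (h𝒱 V₀ hV₀).inter hW

/-- Singleton as an element of the hyperspace. -/
def HypF.sing [T1Space Y] (x : Y) : HypF Y :=
  ⟨{x}, Set.singleton_nonempty x, isClosed_singleton⟩

lemma HypF.continuous_sing [T1Space Y] : Continuous (HypF.sing : Y → HypF Y) := by
  have : Continuous[_, generateFrom (HypF.gens Y)] (HypF.sing : Y → HypF Y) := by
    rw [continuous_generateFrom_iff]
    rintro B ⟨𝒱, h𝒱, rfl⟩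
    have key : (HypF.sing : Y → HypF Y) ⁻¹'
        {S : HypF Y | S.1 ⊆ (⋃ V ∈ 𝒱, V) ∧ ∀ V ∈ 𝒱, (S.1 ∩ V).Nonempty}
        = (⋃ V ∈ 𝒱, V) ∩ ⋂ V ∈ 𝒱, V := by
      ext x
      simp [HypF.sing, Set.singleton_inter_nonempty, Set.singleton_subset_iff]
    rw [key]
    exact (isOpen_biUnion fun V hV => h𝒱 V hV).inter (isOpen_biInter_finset h𝒱)
  exact this

lemma HypF.continuous_union :
    Continuous (fun p : HypF Y × HypF Y => p.1.union p.2) := by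
  have : Continuous[_, generateFrom (HypF.gens Y)]
      (fun p : HypF Y × HypF Y => p.1.union p.2) := by
    rw [continuous_generateFrom_iff]
    rintro B ⟨𝒱, h𝒱, rfl⟩
    classical
    have hW : IsOpen (⋃ V ∈ 𝒱, V) := isOpen_biUnion fun V hV => h𝒱 V hV
    have key : (fun p : HypF Y × HypF Y => p.1.union p.2) ⁻¹'
        {S : HypF Y | S.1 ⊆ (⋃ V ∈ 𝒱, V) ∧ ∀ V ∈ 𝒱, (S.1 ∩ V).Nonempty}
        = ⋃ P ∈ 𝒱.powerset,
            ({A : HypF Y | A.1 ⊆ (⋃ V ∈ 𝒱, V) ∧ ∀ V ∈ P, (A.1 ∩ V).Nonempty} ×ˢ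
             {C : HypF Y | C.1 ⊆ (⋃ V ∈ 𝒱, V) ∧ ∀ V ∈ 𝒱 \ P, (C.1 ∩ V).Nonempty}) := by
      ext ⟨A, C⟩
      constructor
      · rintro ⟨hsub, hhit⟩
        refine Set.mem_iUnion₂.2 ⟨𝒱.filter (fun V => (A.1 ∩ V).Nonempty),
          Finset.mem_powerset.2 (Finset.filter_subset _ _), ?_, ?_⟩
        · exact ⟨fun x hx => hsub (Or.inl hx), fun V hV => (Finset.mem_filter.1 hV).2⟩
        · refine ⟨fun x hx => hsub (Or.inr hx), fun V hV => ?_⟩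
          rcases Finset.mem_sdiff.1 hV with ⟨hV𝒱, hVP⟩
          rcases hhit V hV𝒱 with ⟨x, hxS, hxV⟩
          rcases hxS with h | h
          · exact absurd (Finset.mem_filter.2 ⟨hV𝒱, ⟨x, h, hxV⟩⟩) hVP
          · exact ⟨x, h, hxV⟩
      · intro h
        rcases Set.mem_iUnion₂.1 h with ⟨P, _, ⟨hA1, hA2⟩, hC1, hC2⟩
        refine ⟨Set.union_subset hA1 hC1, fun V hV => ?_⟩
        by_cases hVP : V ∈ P
        · rcases hA2 V hVP with ⟨x, hx, hxV⟩; exact ⟨x, Or.inl hx, hxV⟩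
        · rcases hC2 V (Finset.mem_sdiff.2 ⟨hV, hVP⟩) with ⟨x, hx, hxV⟩
          exact ⟨x, Or.inr hx, hxV⟩
    rw [key]
    refine isOpen_iUnion fun P => isOpen_iUnion fun hP => IsOpen.prod ?_ ?_
    · exact HypF.isOpen_M hW P (fun V hV => h𝒱 V (Finset.mem_powerset.1 hP hV))
    · exact HypF.isOpen_M hW _ (fun V hV => h𝒱 V (Finset.mem_sdiff.1 hV).1)
  exact this

variable [T1Space Y]

/-- Finite subsets of `Z` of bounded size, built recursively. -/
def HypF.chain (Z : Set Y) : ℕ → Set (HypF Y)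
  | 0 => HypF.sing '' Z
  | (n + 1) => (fun p : HypF Y × Y => p.1.union (HypF.sing p.2)) '' ((HypF.chain Z n) ×ˢ Z)

lemma HypF.chain_preconnected {Z : Set Y} (hZ : IsPreconnected Z) (n : ℕ) :
    IsPreconnected (HypF.chain Z n) := by
  induction n with
  | zero => exact hZ.image _ HypF.continuous_sing.continuousOn
  | succ n ih =>
      exact (ih.prod hZ).image _ (HypF.continuous_union.comp
        (continuous_fst.prodMk (HypF.continuous_sing.comp continuous_snd))).continuousOn

lemma HypF.sing_mem_chain {Z : Set Y} {z : Y} (hz : z ∈ Z) (n : ℕ) :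
    HypF.sing z ∈ HypF.chain Z n := by
  induction n with
  | zero => exact ⟨z, hz, rfl⟩
  | succ n ih =>
      refine ⟨(HypF.sing z, z), ⟨ih, hz⟩, ?_⟩
      apply Subtype.ext
      simp [HypF.sing, HypF.union]

lemma HypF.chain_subset {Z : Set Y} (n : ℕ) :
    HypF.chain Z n ⊆ {A : HypF Y | A.1 ⊆ Z ∧ A.1.Finite} := by
  induction n with
  | zero =>
      rintro _ ⟨z, hz, rfl⟩
      exact ⟨Set.singleton_subset_iff.2 hz, Set.finite_singleton z⟩
  | succ n ih =>
      rintro _ ⟨⟨A, z⟩, ⟨hA, hz⟩, rfl⟩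
      rcases ih hA with ⟨h1, h2⟩
      exact ⟨Set.union_subset h1 (Set.singleton_subset_iff.2 hz),
        h2.union (Set.finite_singleton z)⟩

lemma HypF.finite_mem_chain {Z : Set Y} (A : HypF Y) (hAZ : A.1 ⊆ Z) (hfin : A.1.Finite) :
    ∃ n, A ∈ HypF.chain Z n := by
  obtain ⟨s, hne, hcl⟩ := A
  obtain ⟨k, hk⟩ : ∃ k, s.ncard ≤ k + 1 := ⟨s.ncard, by omega⟩
  induction k generalizing s with
  | zero =>
      have h1 : s.ncard = 1 :=
        le_antisymm hk ((Set.ncard_pos hfin).2 hne)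
      rcases Set.ncard_eq_one.1 h1 with ⟨z, rfl⟩
      exact ⟨0, z, hAZ rfl, Subtype.ext rfl⟩
  | succ k ih =>
      by_cases hsmall : s.ncard ≤ k + 1
      · exact ih s hne hcl hAZ hfin hsmall
      · rcases hne with ⟨z, hzs⟩
        have hzZ : z ∈ Z := hAZ hzs
        have hdfin : (s \ {z}).Finite := hfin.diff
        have hdcl : IsClosed (s \ {z}) := hdfin.isClosed
        have hdcard : (s \ {z}).ncard = s.ncard - 1 :=
          Set.ncard_diff_singleton_of_mem hzs
        have hdne : (s \ {z}).Nonempty := by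
          rw [Set.nonempty_iff_ne_empty]
          intro hemp
          have := hdcard
          rw [hemp, Set.ncard_empty] at this
          omega
        have hdZ : (s \ {z}) ⊆ Z := (Set.diff_subset).trans hAZ
        rcases ih (s \ {z}) hdne hdcl hdZ hdfin (by omega) with ⟨n, hn⟩
        refine ⟨n + 1, ⟨(⟨s \ {z}, hdne, hdcl⟩, z), ⟨hn, hzZ⟩, ?_⟩⟩
        apply Subtype.ext
        show (s \ {z}) ∪ {z} = s
        exact Set.diff_union_of_subset (Set.singleton_subset_iff.2 hzs)

lemma HypF.dense_finite {Z : Set Y} (A : HypF Y) (hA : A.1 ⊆ Z) :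
    A ∈ closure {B : HypF Y | B.1 ⊆ Z ∧ B.1.Finite} := by
  classical
  have hb := isTopologicalBasis_of_subbasis (HypF.topology_eq (Y := Y))
  rw [hb.mem_closure_iff]
  rintro o ⟨F, ⟨hFfin, hFsub⟩, rfl⟩ hAo
  -- choose generating families
  set fam : Set (HypF Y) → Finset (Set Y) := fun B =>
    if h : B ∈ HypF.gens Y then h.choose else ∅ with hfam
  have hspec : ∀ B ∈ F, (∀ V ∈ fam B, IsOpen V) ∧
      B = {S : HypF Y | S.1 ⊆ (⋃ V ∈ fam B, V) ∧ ∀ V ∈ fam B, (S.1 ∩ V).Nonempty} := by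
    intro B hB
    have h := hFsub hB
    simp only [hfam, dif_pos h]
    exact h.choose_spec
  set G : Set (Set Y) := ⋃ B ∈ F, (fam B : Set (Set Y)) with hG
  have hGfin : G.Finite := hFfin.biUnion fun B _ => (fam B).finite_toSet
  have hhit : ∀ V ∈ G, (A.1 ∩ V).Nonempty := by
    intro V hV
    rcases Set.mem_iUnion₂.1 hV with ⟨B, hB, hVB⟩
    have hAB : A ∈ B := hAo B hB
    rw [(hspec B hB).2] at hAB
    exact hAB.2 V hVB
  set c : Set Y → Y := fun V => if h : (A.1 ∩ V).Nonempty then h.choose else A.2.1.choose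
    with hc
  have hcmem : ∀ V ∈ G, c V ∈ A.1 ∩ V := by
    intro V hV
    simp only [hc, dif_pos (hhit V hV)]
    exact (hhit V hV).choose_spec
  obtain ⟨a₀, ha₀⟩ := A.2.1
  set P : Set Y := insert a₀ (c '' G) with hP
  have hPfin : P.Finite := (hGfin.image c).insert a₀
  have hPsub : P ⊆ A.1 := by
    rw [hP, Set.insert_subset_iff]
    exact ⟨ha₀, by rintro _ ⟨V, hV, rfl⟩; exact (hcmem V hV).1⟩
  refine ⟨⟨P, ⟨a₀, Set.mem_insert _ _⟩, hPfin.isClosed⟩, ?_, hPsub.trans hA, hPfin⟩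
  intro B hB
  rw [(hspec B hB).2]
  have hAB : A ∈ B := hAo B hB
  rw [(hspec B hB).2] at hAB
  refine ⟨hPsub.trans hAB.1, fun V hV => ?_⟩
  have hVG : V ∈ G := Set.mem_iUnion₂.2 ⟨B, hB, hV⟩
  exact ⟨c V, Set.mem_insert_of_mem _ (Set.mem_image_of_mem _ hVG), (hcmem V hVG).2⟩

lemma HypF.isPreconnected_subsets {Z : Set Y} (hZ : IsConnected Z) :
    IsPreconnected {A : HypF Y | A.1 ⊆ Z} := by
  obtain ⟨⟨z₀, hz₀⟩, hZpre⟩ := hZ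
  have hUnion : IsPreconnected (⋃ n, HypF.chain Z n) :=
    isPreconnected_iUnion
      ⟨HypF.sing z₀, Set.mem_iInter.2 fun n => HypF.sing_mem_chain hz₀ n⟩
      (fun n => HypF.chain_preconnected hZpre n)
  have hEq : (⋃ n, HypF.chain Z n) = {A : HypF Y | A.1 ⊆ Z ∧ A.1.Finite} := by
    apply Set.Subset.antisymm
    · exact Set.iUnion_subset fun n => HypF.chain_subset n
    · rintro A ⟨h1, h2⟩
      rcases HypF.finite_mem_chain A h1 h2 with ⟨n, hn⟩
      exact Set.mem_iUnion.2 ⟨n, hn⟩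
  rw [hEq] at hUnion
  exact hUnion.subset_closure (fun A hA => hA.1) (fun A hA => HypF.dense_finite A hA)

end Statement12Aux

/-- Let `T, Z ∈ F(X)` with `Z` connected and let `f` be a
continuous selection for `F(X)`. If `q = f(T ∪ D)` for some nonempty closed
`D ⊆ Z`, then `f(T ∪ S)` lies in the connected component of `q` for every
nonempty closed `S ⊆ Z`. -/
theorem statement12 (X : Type*) [TopologicalSpace X] [T2Space X]
    (f : HypF X → X) (hf : IsContinuousSelection f)
    (T Z : HypF X) (hZ : IsConnected Z.1)
    (q : X) (D : HypF X) (hD : D.1 ⊆ Z.1) (hq : f (T.union D) = q)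
    (S : HypF X) (hS : S.1 ⊆ Z.1) :
    f (T.union S) ∈ connectedComponent q := by
  have hcont : Continuous fun A : HypF X => f (T.union A) :=
    hf.1.comp (HypF.continuous_union.comp (continuous_const.prodMk continuous_id))
  have hpre : IsPreconnected
      ((fun A : HypF X => f (T.union A)) '' {A : HypF X | A.1 ⊆ Z.1}) :=
    (HypF.isPreconnected_subsets hZ).image _ hcont.continuousOn
  have hqmem : q ∈ (fun A : HypF X => f (T.union A)) '' {A : HypF X | A.1 ⊆ Z.1} :=
    ⟨D, hD, hq⟩
  exact hpre.subset_connectedComponent hqmem ⟨S, hS, rfl⟩
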